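/- Let κ₁, …, κₙ be nested convex families in ℝ^d with n ≥ 1 such that each κᵢ is either constant or continuously shrinking. Suppose ⋂_{i=1}^{n} κᵢ(t₀) is nonempty for some t₀ ≥ 0, let t* = inf { t ≥ 0 | ⋂_{i=1}^{n} κᵢ(t) ≠ ∅ }, and let x* be the lexicographically least point of ⋂_{i=1}^{n} κᵢ(t*). Then there exists a nonempty subset B ⊆ {1,…,n} with |B| ≤ d + 1 such that, setting t*_B = inf { t ≥ 0 | ⋂_{i∈B} κᵢ(t) ≠ ∅ }, one has t*_B = t* and the lexicographically least point of ⋂_{i∈B} κᵢ(t*_B) equals x*. -/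

import Mathlib

/-- A nested convex family in `ℝ^d`. -/
def IsNestedConvexFamily (d : ℕ) (κ : ℝ → Set (EuclideanSpace ℝ (Fin d))) : Prop :=
  (∀ t : ℝ, 0 ≤ t → IsCompact (κ t)) ∧
  (∀ t : ℝ, 0 ≤ t → Convex ℝ (κ t)) ∧
  (∀ a b : ℝ, 0 ≤ a → a ≤ b → κ a ⊆ κ b) ∧
  (∀ t : ℝ, 0 ≤ t → κ t = ⋂ t' ∈ Set.Ioi t, κ t')

/-- The function `f_κ(x) = inf { t ≥ 0 | x ∈ κ t }` determined by a family `κ`. -/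
noncomputable def famFun {d : ℕ} (κ : ℝ → Set (EuclideanSpace ℝ (Fin d)))
    (x : EuclideanSpace ℝ (Fin d)) : ℝ :=
  sInf {t : ℝ | 0 ≤ t ∧ x ∈ κ t}

/-- The family `κ` is constant: `κ t = κ 0` for all `t ≥ 0`. -/
def IsConstantFamily {d : ℕ} (κ : ℝ → Set (EuclideanSpace ℝ (Fin d))) : Prop :=
  ∀ t : ℝ, 0 ≤ t → κ t = κ 0

/-- The family `κ` is continuously shrinking: `f_κ` is not constant on any
nonempty open set, and `κ t'` lies in the interior of `κ t` whenever `t' < t`. -/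
def IsContinuouslyShrinking {d : ℕ} (κ : ℝ → Set (EuclideanSpace ℝ (Fin d))) : Prop :=
  (∀ U : Set (EuclideanSpace ℝ (Fin d)), IsOpen U → U.Nonempty →
    ¬ ∃ c : ℝ, ∀ x ∈ U, famFun κ x = c) ∧
  (∀ t' t : ℝ, 0 ≤ t' → t' < t → κ t' ⊆ interior (κ t))

/-- Lexicographic order on points of `ℝ^d`, by coordinates. -/
def LexLE {d : ℕ} (x y : EuclideanSpace ℝ (Fin d)) : Prop :=
  x = y ∨ ∃ i : Fin d, x i < y i ∧ ∀ j : Fin d, j < i → x j = y j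

/-- `x` is the lexicographically least point of the set `s`. -/
def IsLexLeast {d : ℕ} (s : Set (EuclideanSpace ℝ (Fin d)))
    (x : EuclideanSpace ℝ (Fin d)) : Prop :=
  x ∈ s ∧ ∀ y ∈ s, LexLE x y

open Set

namespace BasisAux

variable {d : ℕ}

local notation "E" => EuclideanSpace ℝ (Fin d)

/-- strictly lexicographically negative -/
def SLN (v : E) : Prop := ∃ i : Fin d, v i < 0 ∧ ∀ j : Fin d, j < i → v j = 0

theorem sln_add {u v : E} (hu : SLN u) (hv : SLN v) : SLN (u + v) := by
  obtain ⟨i, hi, hiz⟩ := hu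
  obtain ⟨i', hi', hiz'⟩ := hv
  rcases lt_trichotomy i i' with h | h | h
  · exact ⟨i, by simpa [hiz' i h] using hi, fun j hj => by
      simp [hiz j hj, hiz' j (hj.trans h)]⟩
  · subst h
    exact ⟨i, by have := add_neg hi hi'; simpa using this, fun j hj => by
      simp [hiz j hj, hiz' j hj]⟩
  · exact ⟨i', by simpa [hiz i' h] using hi', fun j hj => by
      simp [hiz' j hj, hiz j (hj.trans h)]⟩

theorem sln_smul {a : ℝ} (ha : 0 < a) {v : E} (hv : SLN v) : SLN (a • v) := by
  obtain ⟨i, hi, hiz⟩ := hv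
  exact ⟨i, by simpa using mul_neg_of_pos_of_neg ha hi, fun j hj => by simp [hiz j hj]⟩

def SLNQ (v : E) : Prop := v = 0 ∨ SLN v

theorem slnq_add {u v : E} (hu : SLNQ u) (hv : SLNQ v) : SLNQ (u + v) := by
  rcases hu with rfl | hu
  · simpa using hv
  rcases hv with rfl | hv
  · exact Or.inr (by simpa using hu)
  · exact Or.inr (sln_add hu hv)

theorem slnq_smul {a : ℝ} (ha : 0 ≤ a) {v : E} (hv : SLNQ v) : SLNQ (a • v) := by
  rcases eq_or_lt_of_le ha with rfl | ha
  · exact Or.inl (by simp)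
  rcases hv with rfl | hv
  · exact Or.inl (by simp)
  · exact Or.inr (sln_smul ha hv)

theorem sln_add_q {u v : E} (hu : SLN u) (hv : SLNQ v) : SLN (u + v) := by
  rcases hv with rfl | hv
  · simpa using hu
  · exact sln_add hu hv

theorem sln_sum {ι : Type*} (t : Finset ι) (c : ι → ℝ) (v : ι → E)
    (hc : ∀ j ∈ t, 0 ≤ c j) (hv : ∀ j ∈ t, SLN (v j)) {j₀ : ι} (hj₀ : j₀ ∈ t)
    (h0 : 0 < c j₀) : SLN (∑ j ∈ t, c j • v j) := by
  classical
  rw [← Finset.add_sum_erase t _ hj₀]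
  refine sln_add_q (sln_smul h0 (hv _ hj₀)) ?_
  refine Finset.sum_induction _ SLNQ (fun a b ha hb => slnq_add ha hb) (Or.inl rfl) ?_
  intro j hj
  exact slnq_smul (hc j (Finset.mem_of_mem_erase hj)) (Or.inr (hv j (Finset.mem_of_mem_erase hj)))

theorem sln_of_not_lexLE {x y : E} (h : ¬ LexLE x y) : SLN (y - x) := by
  classical
  rw [LexLE] at h
  push_neg at h
  obtain ⟨hne, h2⟩ := h
  have hD : (Finset.univ.filter (fun i : Fin d => x i ≠ y i)).Nonempty := by
    by_contra hD
    rw [Finset.not_nonempty_iff_eq_empty, Finset.filter_eq_empty_iff] at hD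
    exact hne (PiLp.ext fun i => by_contra fun hi => hD (Finset.mem_univ i) hi)
  set i₀ := (Finset.univ.filter (fun i : Fin d => x i ≠ y i)).min' hD with hi₀
  have hmem := (Finset.univ.filter (fun i : Fin d => x i ≠ y i)).min'_mem hD
  rw [Finset.mem_filter] at hmem
  have hzero : ∀ j : Fin d, j < i₀ → x j = y j := by
    intro j hj
    by_contra hji
    exact absurd (Finset.min'_le _ j (Finset.mem_filter.mpr ⟨Finset.mem_univ j, hji⟩))
      (not_le.mpr hj)
  rcases lt_trichotomy (x i₀) (y i₀) with hlt | heq | hgt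
  · obtain ⟨j, hj, hne'⟩ := h2 i₀ hlt
    exact absurd (hzero j hj) hne'
  · exact absurd heq hmem.2
  · exact ⟨i₀, by simpa using hgt, fun j hj => by simp [hzero j hj]⟩

theorem not_sln_of_lexLE {x y : E} (h : LexLE x y) (hs : SLN (y - x)) : False := by
  obtain ⟨i', hneg, hzr⟩ := hs
  rcases h with rfl | ⟨i, hxy, hag⟩
  · simp at hneg
  · rcases lt_trichotomy i i' with hlt | rfl | hlt
    · have := hzr i hlt
      simp only [PiLp.sub_apply] at this
      linarith
    · simp only [PiLp.sub_apply] at hneg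
      linarith
    · have := hag i' hlt
      simp only [PiLp.sub_apply] at hneg
      linarith

theorem conv_comb_mem {s : Set E} (hs : Convex ℝ s) {ι : Type*} (t : Finset ι)
    (w : ι → ℝ) (z : ι → E) {p : E} (hp : p ∈ s) (hz : ∀ j ∈ t, z j ∈ s)
    (hw : ∀ j ∈ t, 0 ≤ w j) (hw1 : ∑ j ∈ t, w j ≤ 1) :
    (1 - ∑ j ∈ t, w j) • p + ∑ j ∈ t, w j • z j ∈ s := by
  classical
  rcases eq_or_lt_of_le (Finset.sum_nonneg hw) with hzero | hpos
  · have hall : ∀ j ∈ t, w j = 0 :=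
      (Finset.sum_eq_zero_iff_of_nonneg hw).mp hzero.symm
    have h1 : ∑ j ∈ t, w j • z j = 0 := Finset.sum_eq_zero fun j hj => by simp [hall j hj]
    rw [h1, ← hzero]
    simpa using hp
  · have hq : t.centerMass w z ∈ s := hs.centerMass_mem hw hpos hz
    have hkey : (∑ j ∈ t, w j) • t.centerMass w z = ∑ j ∈ t, w j • z j := by
      rw [Finset.centerMass, smul_smul, mul_inv_cancel₀ (ne_of_gt hpos), one_smul]
    rw [← hkey]
    exact hs hp hq (by linarith) (le_of_lt hpos) (by ring)

theorem conv_comb_mem_open {s : Set E} (hs : Convex ℝ s) (ho : IsOpen s) {ι : Type*}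
    (t : Finset ι) (w : ι → ℝ) (z : ι → E) {p : E} (hp : p ∈ closure s)
    (hz : ∀ j ∈ t, z j ∈ s) (hw : ∀ j ∈ t, 0 ≤ w j) (hpos : 0 < ∑ j ∈ t, w j)
    (hw1 : ∑ j ∈ t, w j ≤ 1) :
    (1 - ∑ j ∈ t, w j) • p + ∑ j ∈ t, w j • z j ∈ s := by
  classical
  have hq : t.centerMass w z ∈ s := hs.centerMass_mem hw hpos hz
  have hkey : (∑ j ∈ t, w j) • t.centerMass w z = ∑ j ∈ t, w j • z j := by
    rw [Finset.centerMass, smul_smul, mul_inv_cancel₀ (ne_of_gt hpos), one_smul]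
  rw [← hkey]
  have := hs.combo_interior_closure_mem_interior (x := t.centerMass w z) (y := p)
    (a := ∑ j ∈ t, w j) (b := 1 - ∑ j ∈ t, w j)
    (by rwa [ho.interior_eq]) hp hpos (by linarith) (by ring)
  rw [ho.interior_eq] at this
  rw [add_comm]
  exact this

theorem fatten {G : Set E} (hG : Convex ℝ G) (hne : G.Nonempty) :
    ∃ g ∈ G, ∀ u ∈ (affineSpan ℝ G).direction, ∃ ε > 0, ∀ μ : ℝ, |μ| ≤ ε → g + μ • u ∈ G := by
  obtain ⟨g, hg⟩ := hne.intrinsicInterior hG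
  refine ⟨g, intrinsicInterior_subset hg, ?_⟩
  intro u hu
  obtain ⟨y, hy, hyg⟩ := hg
  have hgspan : g ∈ affineSpan ℝ G := by rw [← hyg]; exact y.2
  have hmem : ∀ μ : ℝ, μ • u + g ∈ affineSpan ℝ G := fun μ =>
    AffineSubspace.vadd_mem_of_mem_direction (Submodule.smul_mem _ μ hu) hgspan
  set h : ℝ → (affineSpan ℝ G : Set E) := fun μ => ⟨μ • u + g, hmem μ⟩ with hh
  have hcont : Continuous h := by
    apply Continuous.subtype_mk
    exact (continuous_id.smul continuous_const).add continuous_const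
  have h0 : h 0 = y := by
    apply Subtype.ext
    simp [hh, hyg]
  have hopen : IsOpen (h ⁻¹' (interior ((↑) ⁻¹' G : Set (affineSpan ℝ G)))) :=
    isOpen_interior.preimage hcont
  have h0mem : (0 : ℝ) ∈ h ⁻¹' (interior ((↑) ⁻¹' G)) := by
    rw [Set.mem_preimage, h0]; exact hy
  obtain ⟨ε, hε, hball⟩ := Metric.isOpen_iff.mp hopen 0 h0mem
  refine ⟨ε / 2, by positivity, fun μ hμ => ?_⟩
  have : μ ∈ Metric.ball (0 : ℝ) ε := by
    rw [Metric.mem_ball, Real.dist_eq, sub_zero]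
    linarith [abs_nonneg μ]
  have := interior_subset (hball this)
  rw [Set.mem_preimage] at this
  have : (h μ : E) ∈ G := this
  simpa [hh, add_comm] using this

theorem exists_minimal {α : Type*} [DecidableEq α] [Fintype α] (Q : Finset α → Prop)
    (A₀ : Finset α) (h : Q A₀) : ∃ B, Q B ∧ ∀ i ∈ B, ¬ Q (B.erase i) := by
  classical
  obtain ⟨B, hBmem, hmin⟩ := Finset.exists_min_image
    ((Finset.univ : Finset (Finset α)).filter Q) Finset.card ⟨A₀, by simp [h]⟩
  refine ⟨B, (Finset.mem_filter.mp hBmem).2, fun i hi hQ => ?_⟩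
  have h1 := hmin _ (Finset.mem_filter.mpr ⟨Finset.mem_univ _, hQ⟩)
  rw [Finset.card_erase_of_mem hi] at h1
  have hpos : 0 < B.card := Finset.card_pos.mpr ⟨i, hi⟩
  omega

/-- linear map given by coefficient sums -/
noncomputable def sumMap {ι : Type*} [Fintype ι] (v : ι → E) : (ι → ℝ) →ₗ[ℝ] E where
  toFun c := ∑ j, c j • v j
  map_add' a b := by simp [add_smul, Finset.sum_add_distrib]
  map_smul' r a := by simp [smul_smul, Finset.smul_sum]

noncomputable def sumF (ι : Type*) [Fintype ι] : (ι → ℝ) →ₗ[ℝ] ℝ where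
  toFun c := ∑ j, c j
  map_add' a b := by simp [Finset.sum_add_distrib]
  map_smul' r a := by simp [Finset.mul_sum]

theorem exists_relation {ι : Type*} [Fintype ι] (v : ι → E) (W : Submodule ℝ E)
    (hdim : d + 2 ≤ Fintype.card ι + Module.finrank ℝ W) :
    ∃ c : ι → ℝ, c ≠ 0 ∧ ∑ j, c j = 0 ∧ ∑ j, c j • v j ∈ W := by
  classical
  set φ : (ι → ℝ) →ₗ[ℝ] (E ⧸ W) := W.mkQ.comp (sumMap v) with hφ
  have h1 := LinearMap.finrank_range_add_finrank_ker φ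
  rw [Module.finrank_fintype_fun_eq_card] at h1
  have h2 : Module.finrank ℝ (LinearMap.range φ) ≤ Module.finrank ℝ (E ⧸ W) :=
    Submodule.finrank_le _
  have h3 : Module.finrank ℝ (E ⧸ W) + Module.finrank ℝ W = d := by
    rw [Submodule.finrank_quotient_add_finrank]
    simp [finrank_euclideanSpace]
  have hker : 2 ≤ Module.finrank ℝ (LinearMap.ker φ) := by omega
  set ψ : (LinearMap.ker φ) →ₗ[ℝ] ℝ := (sumF ι).comp (LinearMap.ker φ).subtype with hψ
  have h4 := LinearMap.finrank_range_add_finrank_ker ψ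
  have h5 : Module.finrank ℝ (LinearMap.range ψ) ≤ 1 := by
    have := Submodule.finrank_le (LinearMap.range ψ)
    simpa using this
  have h6 : 1 ≤ Module.finrank ℝ (LinearMap.ker ψ) := by omega
  have : Nontrivial (LinearMap.ker ψ) := by
    apply Module.nontrivial_of_finrank_pos (R := ℝ)
    omega
  obtain ⟨c', hc'⟩ := exists_ne (0 : LinearMap.ker ψ)
  have hcker : (c' : LinearMap.ker φ) ∈ LinearMap.ker ψ := c'.2
  refine ⟨((c' : LinearMap.ker φ) : ι → ℝ), ?_, ?_, ?_⟩
  · intro h0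
    apply hc'
    apply Subtype.ext
    apply Subtype.ext
    exact h0
  · exact LinearMap.mem_ker.mp hcker
  · have h7 := LinearMap.mem_ker.mp (c' : LinearMap.ker φ).2
    exact (Submodule.Quotient.mk_eq_zero W).mp h7

theorem conv_comb_mem' {s : Set E} (hs : Convex ℝ s) {ι : Type*} (t : Finset ι)
    (w : ι → ℝ) (z : ι → E) {p : E} (hp : p ∈ s) (hz : ∀ j ∈ t, w j ≠ 0 → z j ∈ s)
    (hw : ∀ j ∈ t, 0 ≤ w j) (hw1 : ∑ j ∈ t, w j ≤ 1) :
    (1 - ∑ j ∈ t, w j) • p + ∑ j ∈ t, w j • z j ∈ s := by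
  classical
  have hsum : ∑ j ∈ t.filter (fun j => w j ≠ 0), w j = ∑ j ∈ t, w j :=
    Finset.sum_filter_ne_zero t
  have hsumv : ∑ j ∈ t.filter (fun j => w j ≠ 0), w j • z j = ∑ j ∈ t, w j • z j := by
    apply Finset.sum_filter_of_ne
    intro j hj hne h0
    exact hne (by rw [h0, zero_smul])
  rw [← hsum, ← hsumv]
  apply conv_comb_mem hs _ _ _ hp
  · intro j hj
    obtain ⟨hj1, hj2⟩ := Finset.mem_filter.mp hj
    exact hz j hj1 hj2
  · exact fun j hj => hw j (Finset.mem_filter.mp hj).1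
  · rw [hsum]; exact hw1

theorem conv_comb_mem_open' {s : Set E} (hs : Convex ℝ s) (ho : IsOpen s) {ι : Type*}
    (t : Finset ι) (w : ι → ℝ) (z : ι → E) {p : E} (hp : p ∈ closure s)
    (hz : ∀ j ∈ t, w j ≠ 0 → z j ∈ s) (hw : ∀ j ∈ t, 0 ≤ w j)
    (hpos : 0 < ∑ j ∈ t, w j) (hw1 : ∑ j ∈ t, w j ≤ 1) :
    (1 - ∑ j ∈ t, w j) • p + ∑ j ∈ t, w j • z j ∈ s := by
  classical
  have hsum : ∑ j ∈ t.filter (fun j => w j ≠ 0), w j = ∑ j ∈ t, w j :=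
    Finset.sum_filter_ne_zero t
  have hsumv : ∑ j ∈ t.filter (fun j => w j ≠ 0), w j • z j = ∑ j ∈ t, w j • z j := by
    apply Finset.sum_filter_of_ne
    intro j hj hne h0
    exact hne (by rw [h0, zero_smul])
  rw [← hsum, ← hsumv]
  apply conv_comb_mem_open hs ho _ _ _ hp
  · intro j hj
    obtain ⟨hj1, hj2⟩ := Finset.mem_filter.mp hj
    exact hz j hj1 hj2
  · exact fun j hj => hw j (Finset.mem_filter.mp hj).1
  · rw [hsum]; exact hpos
  · rw [hsum]; exact hw1

theorem sign_mul_self_abs (x : ℝ) : Real.sign x * x = |x| := by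
  rcases lt_trichotomy x 0 with h | h | h
  · rw [Real.sign_of_neg h, abs_of_neg h]; ring
  · simp [h]
  · rw [Real.sign_of_pos h, abs_of_pos h]; ring

theorem abs_sign_le_one (x : ℝ) : |Real.sign x| ≤ 1 := by
  rcases lt_trichotomy x 0 with h | h | h
  · rw [Real.sign_of_neg h]; simp
  · simp [h]
  · rw [Real.sign_of_pos h]; simp

/-- union of the family strictly below `T` -/
def famU (κ : ℝ → Set E) (T : ℝ) : Set E := ⋃ t ∈ Set.Ico (0:ℝ) T, κ t

theorem famU_mem {κ : ℝ → Set E} {T : ℝ} {x : E} {t : ℝ} (h0 : 0 ≤ t) (hlt : t < T)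
    (hx : x ∈ κ t) : x ∈ famU κ T := Set.mem_biUnion ⟨h0, hlt⟩ hx

theorem famU_convex {κ : ℝ → Set E} (hκ : IsNestedConvexFamily d κ) (T : ℝ) :
    Convex ℝ (famU κ T) := by
  intro x hx y hy a b ha hb hab
  obtain ⟨t1, ht1, hxt⟩ := Set.mem_iUnion₂.mp hx
  obtain ⟨t2, ht2, hyt⟩ := Set.mem_iUnion₂.mp hy
  have hx' : x ∈ κ (max t1 t2) := hκ.2.2.1 t1 (max t1 t2) ht1.1 (le_max_left _ _) hxt
  have hy' : y ∈ κ (max t1 t2) := hκ.2.2.1 t2 (max t1 t2) ht2.1 (le_max_right _ _) hyt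
  have hmax0 : 0 ≤ max t1 t2 := le_trans ht1.1 (le_max_left _ _)
  exact famU_mem hmax0 (max_lt ht1.2 ht2.2) (hκ.2.1 _ hmax0 hx' hy' ha hb hab)

theorem famU_open {κ : ℝ → Set E} (T : ℝ)
    (hint : ∀ t' t : ℝ, 0 ≤ t' → t' < t → κ t' ⊆ interior (κ t)) :
    IsOpen (famU κ T) := by
  rw [isOpen_iff_forall_mem_open]
  intro x hx
  obtain ⟨t, ht, hxt⟩ := Set.mem_iUnion₂.mp hx
  refine ⟨interior (κ ((t + T)/2)), fun y hy => ?_, isOpen_interior, ?_⟩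
  · exact famU_mem (by linarith [ht.1, ht.2]) (by linarith [ht.2]) (interior_subset hy)
  · exact hint t ((t+T)/2) ht.1 (by linarith [ht.2]) hxt

theorem subset_closure_famU {κ : ℝ → Set E} (hκ : IsNestedConvexFamily d κ)
    {T : ℝ} (hT : 0 < T)
    (hint : ∀ t' t : ℝ, 0 ≤ t' → t' < t → κ t' ⊆ interior (κ t))
    (hnc : ∀ U : Set E, IsOpen U → U.Nonempty → ¬ ∃ c : ℝ, ∀ x ∈ U, famFun κ x = c)
    {x₁ : E} {t₁ : ℝ} (h10 : 0 ≤ t₁) (h1T : t₁ < T) (hx₁ : x₁ ∈ κ t₁) :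
    κ T ⊆ closure (famU κ T) := by
  have hz : x₁ ∈ interior (κ T) := hint t₁ T h10 h1T hx₁
  have h2 : interior (κ T) ⊆ closure (famU κ T) := by
    rcases Set.eq_empty_or_nonempty (interior (κ T) \ closure (famU κ T)) with hA | hA
    · intro y hy
      by_contra hyc
      exact (Set.eq_empty_iff_forall_notMem.mp hA y) ⟨hy, hyc⟩
    · exfalso
      have hval : ∀ y ∈ interior (κ T) \ closure (famU κ T), famFun κ y = T := by
        intro y hy
        obtain ⟨hyi, hyc⟩ := hy
        unfold famFun
        apply le_antisymm
        · apply csInf_le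
          · exact ⟨0, fun t ht => ht.1⟩
          · exact ⟨hT.le, interior_subset hyi⟩
        · apply le_csInf
          · exact ⟨T, hT.le, interior_subset hyi⟩
          intro t ht
          by_contra hlt
          push_neg at hlt
          exact hyc (subset_closure (famU_mem ht.1 hlt ht.2))
      exact hnc (interior (κ T) \ closure (famU κ T))
        (isOpen_interior.sdiff isClosed_closure) hA ⟨T, hval⟩
  intro x hx
  have hseq : ∀ k : ℕ, x + (1/(k+1:ℝ)) • (x₁ - x) ∈ interior (κ T) := by
    intro k
    apply (hκ.2.1 T hT.le).add_smul_sub_mem_interior hx hz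
    constructor
    · positivity
    · rw [div_le_one (by positivity)]
      linarith [Nat.cast_nonneg (α := ℝ) k]
  have htend : Filter.Tendsto (fun k : ℕ => x + (1/(k+1:ℝ)) • (x₁ - x))
      Filter.atTop (nhds x) := by
    have h := tendsto_one_div_add_atTop_nhds_zero_nat (𝕜 := ℝ)
    have h' := (h.smul_const (x₁ - x)).const_add x
    simpa using h'
  have hxc : x ∈ closure (interior (κ T)) :=
    mem_closure_of_tendsto htend (Filter.Eventually.of_forall hseq)
  have h3 := closure_mono h2 hxc
  rwa [closure_closure] at h3

theorem lex_pin {n : ℕ} (C : Set E) (hC : Convex ℝ C) (K : Fin n → Set E)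
    (hK : ∀ i, Convex ℝ (K i)) (xs : E) (hxC : xs ∈ C) (hxK : ∀ i, xs ∈ K i)
    (hleast : ∀ y, y ∈ C → (∀ i, y ∈ K i) → LexLE xs y) :
    ∃ A : Finset (Fin n),
      A.card ≤ Module.finrank ℝ (affineSpan ℝ C).direction ∧
      (∀ y, y ∈ C → (∀ i ∈ A, y ∈ K i) → LexLE xs y) := by
  classical
  set r := Module.finrank ℝ (affineSpan ℝ C).direction with hr
  set Prp : Finset (Fin n) → Prop :=
    fun A => ∀ y, y ∈ C → (∀ i ∈ A, y ∈ K i) → LexLE xs y with hPrp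
  have hunivPrp : Prp Finset.univ := fun y hy hyK =>
    hleast y hy (fun i => hyK i (Finset.mem_univ i))
  obtain ⟨A, hA, hAmin⟩ := exists_minimal Prp Finset.univ hunivPrp
  refine ⟨A, ?_, hA⟩
  by_contra hcard
  push_neg at hcard
  -- minimality witnesses
  have hz : ∀ i : Fin n, i ∈ A → ∃ y, y ∈ C ∧ (∀ l ∈ A.erase i, y ∈ K l) ∧ ¬ LexLE xs y := by
    intro i hi
    have := hAmin i hi
    simp only [hPrp] at this
    push_neg at this
    obtain ⟨y, hy1, hy2, hy3⟩ := this
    exact ⟨y, hy1, hy2, hy3⟩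
  choose! z hzC hzK hznot using hz
  -- vectors
  set v : A → E := fun j => z j - xs with hv
  have hvW : ∀ j : A, (v j) ∈ (affineSpan ℝ C).direction := by
    intro j
    rw [hv]
    have h1 := subset_affineSpan ℝ C (hzC j j.2)
    have h2 := subset_affineSpan ℝ C hxC
    have := AffineSubspace.vsub_mem_direction h1 h2
    simpa using this
  have hvSLN : ∀ j : A, SLN (v j) := fun j => sln_of_not_lexLE (hznot j j.2)
  -- kernel vector
  set φ : (A → ℝ) →ₗ[ℝ] (affineSpan ℝ C).direction :=
    (sumMap v).codRestrict _ (fun c => Submodule.sum_mem _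
      (fun j _ => Submodule.smul_mem _ _ (hvW j))) with hφd
  have h1 := LinearMap.finrank_range_add_finrank_ker φ
  rw [Module.finrank_fintype_fun_eq_card, Fintype.card_coe] at h1
  have h2 : Module.finrank ℝ (LinearMap.range φ) ≤ r := by
    rw [hr]; exact Submodule.finrank_le _
  have h6 : 1 ≤ Module.finrank ℝ (LinearMap.ker φ) := by omega
  have : Nontrivial (LinearMap.ker φ) := by
    apply Module.nontrivial_of_finrank_pos (R := ℝ); omega
  obtain ⟨c', hc'⟩ := exists_ne (0 : LinearMap.ker φ)
  set c : A → ℝ := (c' : A → ℝ) with hcdef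
  have hc0 : c ≠ 0 := fun h => hc' (Subtype.ext h)
  have hrel : ∑ j, c j • v j = 0 := by
    exact congrArg Subtype.val (LinearMap.mem_ker.mp c'.2)
  -- setup coefficients
  obtain ⟨j₀, hj₀⟩ : ∃ j : A, c j ≠ 0 := by
    by_contra hno
    push_neg at hno
    exact hc0 (funext hno)
  set Λ : ℝ := ∑ j, |c j| with hΛ
  have hΛpos : 0 < Λ := by
    rw [hΛ]
    apply Finset.sum_pos' (fun j _ => abs_nonneg _)
    exact ⟨j₀, Finset.mem_univ _, abs_pos.mpr hj₀⟩
  set lam : ℝ := (1 + 2*Λ)⁻¹ with hlam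
  have hlampos : 0 < lam := by rw [hlam]; positivity
  set τ : A → ℝ := fun i => Real.sign (c i) with hτ
  set a : A → A → ℝ := fun i j => |c j| - τ i * c j with ha
  have habs : ∀ i j : A, |τ i * c j| ≤ |c j| := by
    intro i j
    rw [abs_mul]
    calc |τ i| * |c j| ≤ 1 * |c j| :=
          mul_le_mul_of_nonneg_right (abs_sign_le_one _) (abs_nonneg _)
    _ = |c j| := one_mul _
  have ha_nonneg : ∀ i j : A, 0 ≤ a i j := by
    intro i j
    simp only [ha, sub_nonneg]
    exact le_trans (le_abs_self _) (habs i j)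
  have ha_self : ∀ i : A, a i i = 0 := by
    intro i
    simp only [ha, hτ]
    rw [sign_mul_self_abs]
    ring
  have ha_le : ∀ i j : A, a i j ≤ 2 * |c j| := by
    intro i j
    simp only [ha]
    have h2 := neg_abs_le (τ i * c j)
    have h3 := habs i j
    have h4 : -(|c j|) ≤ τ i * c j := by
      have := neg_le_neg h3
      linarith
    linarith
  set S : A → ℝ := fun i => ∑ j, a i j with hS
  have hS_le : ∀ i : A, S i ≤ 2 * Λ := by
    intro i
    simp only [hS, hΛ]
    rw [Finset.mul_sum]
    exact Finset.sum_le_sum fun j _ => ha_le i j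
  have hS_nonneg : ∀ i : A, 0 ≤ S i := fun i =>
    Finset.sum_nonneg fun j _ => ha_nonneg i j
  have hlamS : ∀ i : A, lam * S i ≤ 1 := by
    intro i
    calc lam * S i ≤ lam * (2*Λ) := by
          apply mul_le_mul_of_nonneg_left (hS_le i) hlampos.le
    _ ≤ 1 := by
        rw [hlam]
        rw [inv_mul_le_iff₀ (by positivity)]
        linarith
  -- key sum identity
  have hsumv : ∀ i : A, ∑ j, a i j • v j = ∑ j, |c j| • v j := by
    intro i
    have e1 : ∀ j : A, a i j • v j = |c j| • v j - (τ i * c j) • v j := by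
      intro j
      simp only [ha, sub_smul]
    rw [Finset.sum_congr rfl fun j _ => e1 j, Finset.sum_sub_distrib]
    have e2 : ∑ j, (τ i * c j) • v j = τ i • ∑ j, c j • v j := by
      rw [Finset.smul_sum]
      exact Finset.sum_congr rfl fun j _ => by rw [smul_smul]
    rw [e2, hrel, smul_zero, sub_zero]
  set Y : E := ∑ j, |c j| • v j with hY
  have hYSLN : SLN Y := by
    rw [hY]
    exact sln_sum Finset.univ _ v (fun j _ => abs_nonneg _) (fun j _ => hvSLN j)
      (Finset.mem_univ j₀) (abs_pos.mpr hj₀)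
  set y : E := xs + lam • Y with hy
  -- key representation
  have hkey : ∀ i : A, y = (1 - ∑ j, (lam * a i j)) • xs + ∑ j, (lam * a i j) • z j := by
    intro i
    have e1 : ∀ j : A, (lam * a i j) • (z (j : Fin n) : E)
        = (lam * a i j) • v j + (lam * a i j) • xs := by
      intro j
      have hzv : (z (j : Fin n) : E) = v j + xs := by simp [hv]
      rw [hzv, smul_add]
    have e2 : ∑ j, (lam * a i j) • (z (j : Fin n) : E)
        = ∑ j, (lam * a i j) • v j + (∑ j, (lam * a i j)) • xs := by
      rw [Finset.sum_congr rfl fun j _ => e1 j, Finset.sum_add_distrib, ← Finset.sum_smul]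
    have e3 : ∑ j, (lam * a i j) • v j = lam • ∑ j, a i j • v j := by
      rw [Finset.smul_sum]
      exact Finset.sum_congr rfl fun j _ => (smul_smul _ _ _).symm
    rw [e2, e3, hsumv i, sub_smul, one_smul, hy]
    abel
  -- memberships
  have hsum_lam : ∀ i : A, ∑ j, lam * a i j = lam * S i := by
    intro i
    simp only [hS]
    rw [Finset.mul_sum]
  have hymem : ∀ i : Fin n, i ∈ A → y ∈ K i := by
    intro i hi
    set ii : A := ⟨i, hi⟩ with hii
    rw [hkey ii]
    have hs0 : lam * a ii ii = 0 := by rw [ha_self ii]; ring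
    apply conv_comb_mem' (hK i) _ _ _ (hxK i)
    · intro j _ hwne
      have hjne : i ≠ (j : Fin n) := by
        intro h
        exact hwne (by rw [show j = ii from Subtype.ext h.symm, hs0])
      exact hzK j j.2 i (Finset.mem_erase.mpr ⟨hjne, hi⟩)
    · intro j _
      exact mul_nonneg hlampos.le (ha_nonneg ii j)
    · rw [hsum_lam ii]
      exact hlamS ii
  have hyC : y ∈ C := by
    obtain ⟨i₁, hi₁⟩ := Finset.card_pos.mp (show 0 < A.card by omega)
    rw [hkey ⟨i₁, hi₁⟩]
    apply conv_comb_mem hC _ _ _ hxC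
    · exact fun j _ => hzC (j : Fin n) j.2
    · exact fun j _ => mul_nonneg hlampos.le (ha_nonneg _ j)
    · rw [hsum_lam]; exact hlamS _
  have hlex : LexLE xs y := hA y hyC hymem
  have hsln : SLN (y - xs) := by
    have : y - xs = lam • Y := by rw [hy]; abel
    rw [this]
    exact sln_smul hlampos hYSLN
  exact not_sln_of_lexLE hlex hsln

theorem t_pin {n : ℕ} (κ : Fin n → ℝ → Set E) (hκ : ∀ i, IsNestedConvexFamily d (κ i))
    (hshrink : ∀ i, IsConstantFamily (κ i) ∨ IsContinuouslyShrinking (κ i))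
    {T : ℝ} (hT : 0 < T) (B₀ : Finset (Fin n))
    (hPB : ∀ t, 0 ≤ t → t < T → ¬(⋂ i ∈ B₀, κ i t).Nonempty)
    (hmin : ∀ i ∈ B₀, ∃ t, 0 ≤ t ∧ t < T ∧ (⋂ j ∈ B₀.erase i, κ j t).Nonempty)
    (hs2 : 2 ≤ B₀.card)
    (hGne : (⋂ i ∈ B₀, κ i T).Nonempty) :
    B₀.card + Module.finrank ℝ (affineSpan ℝ (⋂ i ∈ B₀, κ i T)).direction ≤ d + 1 := by
  classical
  by_contra hbig
  push_neg at hbig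
  set G : Set E := ⋂ i ∈ B₀, κ i T with hG
  set W := (affineSpan ℝ G).direction with hW
  have hBne : B₀.Nonempty := Finset.card_pos.mp (by omega)
  have hGconv : Convex ℝ G := by
    apply convex_iInter; intro i; apply convex_iInter; intro _
    exact (hκ i).2.1 T hT.le
  have hGsub : ∀ i ∈ B₀, G ⊆ κ i T := by
    intro i hi x hx
    exact Set.mem_iInter₂.mp hx i hi
  obtain ⟨g, hgG, hfat⟩ := fatten hGconv hGne
  -- witnesses from minimality
  have hmin' : ∀ i ∈ B₀, ∃ t, ∃ y : E, 0 ≤ t ∧ t < T ∧ ∀ j ∈ B₀.erase i, y ∈ κ j t := by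
    intro i hi
    obtain ⟨t, ht0, htT, y, hy⟩ := hmin i hi
    exact ⟨t, y, ht0, htT, fun j hj => Set.mem_iInter₂.mp hy j hj⟩
  choose! tz zz htz0 htzT hzmem using hmin'
  set tbar := B₀.sup' hBne tz with htbar
  have htbar0 : 0 ≤ tbar := by
    obtain ⟨i₂, hi₂⟩ := hBne
    exact le_trans (htz0 i₂ hi₂) (Finset.le_sup' tz hi₂)
  have htbarT : tbar < T := (Finset.sup'_lt_iff hBne).mpr (fun i hi => htzT i hi)
  have hzmem' : ∀ i ∈ B₀, ∀ j ∈ B₀.erase i, zz i ∈ κ j tbar := by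
    intro i hi j hj
    exact (hκ j).2.2.1 _ _ (htz0 i hi) (Finset.le_sup' tz hi) (hzmem i hi j hj)
  -- relation
  set v : B₀ → E := fun j => zz (j : Fin n) - g with hv
  have hdim' : d + 2 ≤ Fintype.card B₀ + Module.finrank ℝ W := by
    rw [Fintype.card_coe]; omega
  obtain ⟨c, hc0, hcsum, hcW⟩ := exists_relation v W hdim'
  set u : E := ∑ j, c j • v j with hu
  obtain ⟨j₀, hj₀⟩ : ∃ j : B₀, c j ≠ 0 := by
    by_contra hno; push_neg at hno; exact hc0 (funext hno)
  set Λ : ℝ := ∑ j, |c j| with hΛ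
  have hΛpos : 0 < Λ := by
    rw [hΛ]
    apply Finset.sum_pos' (fun j _ => abs_nonneg _)
    exact ⟨j₀, Finset.mem_univ _, abs_pos.mpr hj₀⟩
  obtain ⟨ε, hεpos, hfatu⟩ := hfat u hcW
  set lam : ℝ := min ((2*(1 + Λ))⁻¹) (ε/2) with hlam
  have hlampos : 0 < lam := lt_min (by positivity) (by positivity)
  have hlamΛ : lam * Λ ≤ 1/2 := by
    calc lam * Λ ≤ (2*(1 + Λ))⁻¹ * Λ :=
          mul_le_mul_of_nonneg_right (min_le_left _ _) hΛpos.le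
    _ ≤ 1/2 := by
        rw [inv_mul_le_iff₀ (by positivity)]
        linarith
  have h1lam : (1:ℝ)/2 ≤ 1 - lam * Λ := by linarith
  have h1lampos : 0 < 1 - lam * Λ := by linarith
  set τ : B₀ → ℝ := fun i => Real.sign (c i) with hτ
  set a : B₀ → B₀ → ℝ := fun i j => |c j| - τ i * c j with ha
  have habs : ∀ i j : B₀, |τ i * c j| ≤ |c j| := by
    intro i j
    rw [abs_mul]
    calc |τ i| * |c j| ≤ 1 * |c j| :=
          mul_le_mul_of_nonneg_right (abs_sign_le_one _) (abs_nonneg _)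
    _ = |c j| := one_mul _
  have ha_nonneg : ∀ i j : B₀, 0 ≤ a i j := by
    intro i j
    simp only [ha, sub_nonneg]
    exact le_trans (le_abs_self _) (habs i j)
  have ha_self : ∀ i : B₀, a i i = 0 := by
    intro i
    simp only [ha, hτ]
    rw [sign_mul_self_abs]
    ring
  have hS_eq : ∀ i : B₀, ∑ j, a i j = Λ := by
    intro i
    have e1 : ∀ j : B₀, a i j = |c j| - τ i * c j := fun j => by simp only [ha]
    rw [Finset.sum_congr rfl fun j _ => e1 j, Finset.sum_sub_distrib, ← Finset.mul_sum,
      hcsum, mul_zero, sub_zero, hΛ]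
  have hsum_lam : ∀ i : B₀, ∑ j, lam * a i j = lam * Λ := by
    intro i
    rw [← Finset.mul_sum, hS_eq i]
  -- the points p i
  have hpmem : ∀ i : B₀, g + (lam * τ i / (1 - lam * Λ)) • u ∈ G := by
    intro i
    apply hfatu
    rw [abs_div, abs_of_pos h1lampos, div_le_iff₀ h1lampos]
    calc |lam * τ i| = lam * |τ i| := by rw [abs_mul, abs_of_pos hlampos]
    _ ≤ lam * 1 := mul_le_mul_of_nonneg_left (abs_sign_le_one _) hlampos.le
    _ = lam := mul_one _
    _ ≤ ε/2 := min_le_right _ _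
    _ ≤ ε * (1 - lam * Λ) := by nlinarith
  set Y : E := ∑ j, |c j| • v j with hY
  set w : E := g + lam • Y with hw
  -- key identity
  have hsumv : ∀ i : B₀, ∑ j, a i j • v j = Y - τ i • u := by
    intro i
    have e1 : ∀ j : B₀, a i j • v j = |c j| • v j - (τ i * c j) • v j := by
      intro j
      simp only [ha, sub_smul]
    rw [Finset.sum_congr rfl fun j _ => e1 j, Finset.sum_sub_distrib]
    have e2 : ∑ j, (τ i * c j) • v j = τ i • ∑ j, c j • v j := by
      rw [Finset.smul_sum]
      exact Finset.sum_congr rfl fun j _ => by rw [smul_smul]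
    rw [e2, ← hu, ← hY]
  have hkey : ∀ i : B₀, w = (1 - ∑ j, (lam * a i j)) •
      (g + (lam * τ i / (1 - lam * Λ)) • u) + ∑ j, (lam * a i j) • zz (j : Fin n) := by
    intro i
    rw [hsum_lam i]
    have e1 : ∀ j : B₀, (lam * a i j) • (zz (j : Fin n) : E)
        = (lam * a i j) • v j + (lam * a i j) • g := by
      intro j
      have hzv : (zz (j : Fin n) : E) = v j + g := by simp [hv]
      rw [hzv, smul_add]
    have e2 : ∑ j, (lam * a i j) • (zz (j : Fin n) : E)
        = ∑ j, (lam * a i j) • v j + (∑ j, (lam * a i j)) • g := by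
      rw [Finset.sum_congr rfl fun j _ => e1 j, Finset.sum_add_distrib, ← Finset.sum_smul]
    have e3 : ∑ j, (lam * a i j) • v j = lam • ∑ j, a i j • v j := by
      rw [Finset.smul_sum]
      exact Finset.sum_congr rfl fun j _ => (smul_smul _ _ _).symm
    have e4 : (1 - lam * Λ) • (g + (lam * τ i / (1 - lam * Λ)) • u)
        = (1 - lam * Λ) • g + (lam * τ i) • u := by
      rw [smul_add, smul_smul]
      congr 2
      field_simp
    rw [e2, e3, hsumv i, e4, hsum_lam i, hw]
    module
  -- memberships
  have hmemb : ∀ i ∈ B₀, ∃ t, 0 ≤ t ∧ t < T ∧ w ∈ κ i t := by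
    intro i hi
    set ii : B₀ := ⟨i, hi⟩ with hii
    have hs0 : lam * a ii ii = 0 := by rw [ha_self ii]; ring
    have hzmem'' : ∀ j : B₀, (j : Fin n) ≠ i → zz (j : Fin n) ∈ κ i tbar := by
      intro j hj
      exact hzmem' (j : Fin n) j.2 i (Finset.mem_erase.mpr ⟨Ne.symm hj, hi⟩)
    have hwne_ne : ∀ j : B₀, lam * a ii j ≠ 0 → (j : Fin n) ≠ i := by
      intro j hne h
      exact hne (by rw [show j = ii from Subtype.ext h, hs0])
    rcases hshrink i with hconst | hshr
    · refine ⟨tbar, htbar0, htbarT, ?_⟩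
      rw [hconst tbar htbar0]
      rw [hkey ii]
      apply conv_comb_mem' ((hκ i).2.1 0 le_rfl) _ _ _ ?_
      · intro j _ hne
        rw [← hconst tbar htbar0]
        exact hzmem'' j (hwne_ne j hne)
      · exact fun j _ => mul_nonneg hlampos.le (ha_nonneg ii j)
      · rw [hsum_lam ii]; linarith
      · rw [← hconst T hT.le]
        exact hGsub i hi (hpmem ii)
    · have hUconv := famU_convex (hκ i) T
      have hUopen := famU_open T hshr.2
      obtain ⟨j', hj'B, hj'ne⟩ := Finset.exists_mem_ne (show 1 < B₀.card by omega) i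
      have hzj' : zz j' ∈ κ i tbar :=
        hzmem' j' hj'B i (Finset.mem_erase.mpr ⟨Ne.symm hj'ne, hi⟩)
      have hGcl : G ⊆ closure (famU (κ i) T) :=
        (hGsub i hi).trans
          (subset_closure_famU (hκ i) hT hshr.2 hshr.1 htbar0 htbarT hzj')
      have hwU : w ∈ famU (κ i) T := by
        rw [hkey ii]
        apply conv_comb_mem_open' hUconv hUopen _ _ _ (hGcl (hpmem ii))
        · intro j _ hne
          exact famU_mem htbar0 htbarT (hzmem'' j (hwne_ne j hne))
        · exact fun j _ => mul_nonneg hlampos.le (ha_nonneg ii j)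
        · rw [hsum_lam ii]; positivity
        · rw [hsum_lam ii]; linarith
      obtain ⟨t, ht, hwt⟩ := Set.mem_iUnion₂.mp hwU
      exact ⟨t, ht.1, ht.2, hwt⟩
  choose! F hF0 hFT hFw using hmemb
  set that := B₀.sup' hBne F with hthat
  have hthat0 : 0 ≤ that := by
    obtain ⟨i₂, hi₂⟩ := hBne
    exact le_trans (hF0 i₂ hi₂) (Finset.le_sup' F hi₂)
  have hthatT : that < T := (Finset.sup'_lt_iff hBne).mpr (fun i hi => hFT i hi)
  apply hPB that hthat0 hthatT
  refine ⟨w, Set.mem_iInter₂.mpr fun i hi => ?_⟩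
  exact (hκ i).2.2.1 _ _ (hF0 i hi) (Finset.le_sup' F hi) (hFw i hi)


end BasisAux

open BasisAux

theorem basis_shrinking {d n : ℕ} (hn : 1 ≤ n)
    (κ : Fin n → ℝ → Set (EuclideanSpace ℝ (Fin d)))
    (hκ : ∀ i, IsNestedConvexFamily d (κ i))
    (hshrink : ∀ i, IsConstantFamily (κ i) ∨ IsContinuouslyShrinking (κ i))
    (t₀ : ℝ) (ht₀ : 0 ≤ t₀) (hne : (⋂ i : Fin n, κ i t₀).Nonempty)
    (tStar : ℝ)
    (htStar : tStar = sInf {t : ℝ | 0 ≤ t ∧ (⋂ i : Fin n, κ i t).Nonempty})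
    (xStar : EuclideanSpace ℝ (Fin d))
    (hxStar : IsLexLeast (⋂ i : Fin n, κ i tStar) xStar) :
    ∃ B : Finset (Fin n), B.Nonempty ∧ B.card ≤ d + 1 ∧
      sInf {t : ℝ | 0 ≤ t ∧ (⋂ i ∈ B, κ i t).Nonempty} = tStar ∧
      IsLexLeast (⋂ i ∈ B, κ i (sInf {t : ℝ | 0 ≤ t ∧ (⋂ i ∈ B, κ i t).Nonempty}))
        xStar := by

  classical
  have hEd : Module.finrank ℝ (EuclideanSpace ℝ (Fin d)) = d := finrank_euclideanSpace_fin
  have htS0 : 0 ≤ tStar := by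
    rw [htStar]
    exact le_csInf ⟨t₀, ht₀, hne⟩ (fun b hb => hb.1)
  have hxs : xStar ∈ ⋂ i : Fin n, κ i tStar := hxStar.1
  have hxsi : ∀ i, xStar ∈ κ i tStar := Set.mem_iInter.mp hxs
  have hempty : ∀ t, 0 ≤ t → t < tStar → ¬(⋂ i : Fin n, κ i t).Nonempty := by
    intro t ht0 htT hne'
    have : tStar ≤ t := by
      rw [htStar]
      apply csInf_le
      · exact ⟨0, fun b hb => hb.1⟩
      · exact ⟨ht0, hne'⟩
    linarith
  rcases eq_or_lt_of_le htS0 with h0 | hpos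
  · -- tStar = 0
    set i₀ : Fin n := ⟨0, hn⟩ with hi₀
    obtain ⟨A, hAcard, hAleast⟩ := lex_pin (κ i₀ tStar) ((hκ i₀).2.1 tStar htS0)
      (fun i => κ i tStar) (fun i => (hκ i).2.1 tStar htS0) xStar (hxsi i₀) hxsi
      (fun y _ hy => hxStar.2 y (Set.mem_iInter.mpr hy))
    have hr : Module.finrank ℝ (affineSpan ℝ (κ i₀ tStar)).direction ≤ d := by
      have h2 := Submodule.finrank_le (affineSpan ℝ (κ i₀ tStar)).direction
      rwa [hEd] at h2
    set B : Finset (Fin n) := insert i₀ A with hB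
    have hmemB : xStar ∈ ⋂ i ∈ B, κ i tStar := Set.mem_iInter₂.mpr fun i _ => hxsi i
    have hInf : sInf {t : ℝ | 0 ≤ t ∧ (⋂ i ∈ B, κ i t).Nonempty} = tStar := by
      apply le_antisymm
      · apply csInf_le
        · exact ⟨0, fun b hb => hb.1⟩
        · exact ⟨htS0, ⟨xStar, hmemB⟩⟩
      · apply le_csInf
        · exact ⟨tStar, htS0, ⟨xStar, hmemB⟩⟩
        intro b hb
        rw [← h0]
        exact hb.1
    refine ⟨B, Finset.insert_nonempty _ _, ?_, hInf, ?_⟩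
    · calc B.card ≤ A.card + 1 := Finset.card_insert_le _ _
      _ ≤ d + 1 := by omega
    · rw [hInf]
      refine ⟨hmemB, fun y hy => ?_⟩
      apply hAleast y
      · exact Set.mem_iInter₂.mp hy i₀ (Finset.mem_insert_self _ _)
      · intro i hiA
        exact Set.mem_iInter₂.mp hy i (Finset.mem_insert_of_mem hiA)
  · -- 0 < tStar
    set P : Finset (Fin n) → Prop :=
      fun B => ∀ t, 0 ≤ t → t < tStar → ¬(⋂ i ∈ B, κ i t).Nonempty with hP
    have hPuniv : P Finset.univ := by
      intro t ht0 htT h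
      apply hempty t ht0 htT
      have : ⋂ i ∈ (Finset.univ : Finset (Fin n)), κ i t = ⋂ i : Fin n, κ i t := by simp
      rwa [this] at h
    obtain ⟨B₀, hPB₀, hminB₀⟩ := exists_minimal P Finset.univ hPuniv
    have hB₀ne : B₀.Nonempty := by
      rcases Finset.eq_empty_or_nonempty B₀ with rfl | h
      · exfalso
        apply hPB₀ 0 le_rfl hpos
        refine ⟨0, ?_⟩
        simp
      · exact h
    have hmin' : ∀ i ∈ B₀, ∃ t, 0 ≤ t ∧ t < tStar ∧
        (⋂ j ∈ B₀.erase i, κ j t).Nonempty := by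
      intro i hi
      have h := hminB₀ i hi
      simp only [hP] at h
      push_neg at h
      obtain ⟨t, ht0, htT, hne'⟩ := h
      exact ⟨t, ht0, htT, hne'⟩
    set G : Set (EuclideanSpace ℝ (Fin d)) := ⋂ i ∈ B₀, κ i tStar with hGdef
    have hGmem : xStar ∈ G := Set.mem_iInter₂.mpr fun i _ => hxsi i
    have hGconv : Convex ℝ G := by
      apply convex_iInter; intro i; apply convex_iInter; intro _
      exact (hκ i).2.1 tStar htS0
    have hdim : B₀.card + Module.finrank ℝ (affineSpan ℝ G).direction ≤ d + 1 := by
      by_cases hc2 : 2 ≤ B₀.card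
      · exact t_pin κ hκ hshrink hpos B₀ hPB₀ hmin' hc2 ⟨xStar, hGmem⟩
      · have hc1 : B₀.card = 1 := by
          have := Finset.card_pos.mpr hB₀ne; omega
        have h2 := Submodule.finrank_le (affineSpan ℝ G).direction
        rw [hEd] at h2
        omega
    obtain ⟨A, hAcard, hAleast⟩ := lex_pin G hGconv
      (fun i => κ i tStar) (fun i => (hκ i).2.1 tStar htS0) xStar hGmem hxsi
      (fun y _ hy => hxStar.2 y (Set.mem_iInter.mpr hy))
    set B : Finset (Fin n) := B₀ ∪ A with hB
    have hBsub : B₀ ⊆ B := Finset.subset_union_left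
    have hmemB : xStar ∈ ⋂ i ∈ B, κ i tStar := Set.mem_iInter₂.mpr fun i _ => hxsi i
    have hInf : sInf {t : ℝ | 0 ≤ t ∧ (⋂ i ∈ B, κ i t).Nonempty} = tStar := by
      apply le_antisymm
      · apply csInf_le
        · exact ⟨0, fun b hb => hb.1⟩
        · exact ⟨htS0, ⟨xStar, hmemB⟩⟩
      · apply le_csInf
        · exact ⟨tStar, htS0, ⟨xStar, hmemB⟩⟩
        intro b hb
        by_contra hlt
        push_neg at hlt
        apply hPB₀ b hb.1 hlt
        obtain ⟨y, hy⟩ := hb.2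
        exact ⟨y, Set.mem_iInter₂.mpr fun i hi => Set.mem_iInter₂.mp hy i (hBsub hi)⟩
    obtain ⟨iw, hiw⟩ := hB₀ne
    refine ⟨B, ⟨iw, hBsub hiw⟩, ?_, hInf, ?_⟩
    · calc B.card ≤ B₀.card + A.card := Finset.card_union_le _ _
      _ ≤ d + 1 := by omega
    · rw [hInf]
      refine ⟨hmemB, fun y hy => ?_⟩
      apply hAleast y
      · exact Set.mem_iInter₂.mpr fun i hi => Set.mem_iInter₂.mp hy i (hBsub hi)
      · intro i hiA
        exact Set.mem_iInter₂.mp hy i (Finset.mem_union_right _ hiA)
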